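/- (Recursion for $G$.) With $G(a,b,c,d,e)$ defined as the multivariate $q$-binomial sum over families $(k_{i,n})$ as in the context, for all integers $a > 0$, $b > 0$, $c \geq 0$, $d \geq 0$, and all integers $e$, one has $G(a,b,c,d,e) = \sum_{k_1,k_2,k_3,k_4 \geq 0} \left(\prod_{i=1}^{2} \genfrac{[}{]}{0pt}{}{e-2a+2b+c+d-k_3-k_4}{k_i}_q \genfrac{[}{]}{0pt}{}{e-2a+b+c+d}{k_{i+2}}_q\right) G(a-b-k_1,\; b-k_1-k_2-k_3-k_4,\; c-k_1-k_4,\; d-k_1-k_3,\; e)$. -/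

import Mathlib

noncomputable def qint (t : RatFunc ℚ) (n : ℤ) : RatFunc ℚ := t ^ n - t ^ (-n)

noncomputable def qfact (t : RatFunc ℚ) (n : ℤ) : RatFunc ℚ :=
  ∏ i ∈ Finset.range n.toNat, qint t ((i : ℤ) + 1)

/-- The symmetric `q`-binomial coefficient `[n m]_q`, with `t = q^{1/2}`. -/
noncomputable def qbinom (t : RatFunc ℚ) (n m : ℤ) : RatFunc ℚ :=
  if 0 ≤ m ∧ m ≤ n then qfact t n / (qfact t m * qfact t (n - m)) else 0

/-- Inner sum `∑_{m ≥ 1} (2m(k_{1,n+m}+k_{2,n+m}) + (2m-1)(k_{3,n+m}+k_{4,n+m}))`,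
where `k i n` encodes the paper's `k_{i+1, n+1}`. -/
noncomputable def S1 (k : Fin 4 → ℕ → ℕ) (n : ℕ) : ℤ :=
  ∑ᶠ m : ℕ, ((2 * ((m : ℤ) + 1)) * ((k 0 (n + m + 1) : ℤ) + (k 1 (n + m + 1) : ℤ))
    + (2 * ((m : ℤ) + 1) - 1) * ((k 2 (n + m + 1) : ℤ) + (k 3 (n + m + 1) : ℤ)))

/-- Inner sum `∑_{m ≥ 0} ((2m+1)(k_{1,n+m}+k_{2,n+m}) + 2m(k_{3,n+m}+k_{4,n+m}))`. -/
noncomputable def S2 (k : Fin 4 → ℕ → ℕ) (n : ℕ) : ℤ :=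
  ∑ᶠ m : ℕ, ((2 * (m : ℤ) + 1) * ((k 0 (n + m) : ℤ) + (k 1 (n + m) : ℤ))
    + 2 * (m : ℤ) * ((k 2 (n + m) : ℤ) + (k 3 (n + m) : ℤ)))

/-- Least `N` beyond which the family `k` vanishes. -/
noncomputable def supBound (k : Fin 4 → ℕ → ℕ) : ℕ :=
  sInf {N | ∀ (i : Fin 4) (n : ℕ), N ≤ n → k i n = 0}

/-- The product of symmetric `q`-binomials attached to a family `(k_{i,n})`. -/
noncomputable def termG (t : RatFunc ℚ) (e : ℤ) (k : Fin 4 → ℕ → ℕ) : RatFunc ℚ :=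
  ∏ n ∈ Finset.range (supBound k),
    (qbinom t (e - S1 k n) (k 0 n) * qbinom t (e - S1 k n) (k 1 n) *
     qbinom t (e - S2 k n) (k 2 n) * qbinom t (e - S2 k n) (k 3 n))

/-- A finitely supported family `(k_{i,n})_{1≤i≤4, n≥1}` is admissible for `(a,b,c,d)` if
`a = ∑ (n+δ_{i,1}) k_{i,n}`, `b = ∑ k_{i,n}`, `c = ∑ (k_{1,n}+k_{4,n})`,
`d = ∑ (k_{1,n}+k_{3,n})`.  Here `k i n` encodes the paper's `k_{i+1, n+1}`. -/
def Admissible (a b c d : ℤ) (k : Fin 4 → ℕ → ℕ) : Prop :=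
  {p : Fin 4 × ℕ | k p.1 p.2 ≠ 0}.Finite ∧
  a = ∑ᶠ n : ℕ, (((n : ℤ) + 2) * (k 0 n : ℤ)
      + ((n : ℤ) + 1) * ((k 1 n : ℤ) + (k 2 n : ℤ) + (k 3 n : ℤ))) ∧
  b = ∑ᶠ n : ℕ, ((k 0 n : ℤ) + (k 1 n : ℤ) + (k 2 n : ℤ) + (k 3 n : ℤ)) ∧
  c = ∑ᶠ n : ℕ, ((k 0 n : ℤ) + (k 3 n : ℤ)) ∧
  d = ∑ᶠ n : ℕ, ((k 0 n : ℤ) + (k 2 n : ℤ))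

open Classical in
/-- The multivariate `q`-binomial sum `G(a,b,c,d,e)` of the paper. -/
noncomputable def G (t : RatFunc ℚ) (a b c d e : ℤ) : RatFunc ℚ :=
  ∑ᶠ k : Fin 4 → ℕ → ℕ, if Admissible a b c d k then termG t e k else 0

namespace Stmt6Aux

open Function Set

lemma qint_ne_zero {n : ℤ} (hn : 0 < n) : qint RatFunc.X n ≠ 0 := by
  unfold qint
  intro h
  rw [sub_eq_zero] at h
  have hX : (RatFunc.X : RatFunc ℚ) ≠ 0 := RatFunc.X_ne_zero
  have h2 : (RatFunc.X : RatFunc ℚ) ^ (n + n) = 1 := by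
    rw [zpow_add₀ hX]
    nth_rewrite 2 [h]
    rw [← zpow_add₀ hX]
    simp
  have h3 : (RatFunc.X : RatFunc ℚ) ^ ((n + n).toNat) = 1 := by
    rw [← zpow_natCast, Int.toNat_of_nonneg (by omega)]
    exact h2
  have h4 : (Polynomial.X : Polynomial ℚ) ^ ((n + n).toNat) = 1 := by
    apply RatFunc.algebraMap_injective ℚ
    rw [map_pow, map_one, RatFunc.algebraMap_X]
    exact h3
  have h5 := congrArg Polynomial.natDegree h4
  rw [Polynomial.natDegree_X_pow, Polynomial.natDegree_one] at h5
  omega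

lemma qfact_ne_zero (n : ℤ) : qfact RatFunc.X n ≠ 0 := by
  unfold qfact
  apply Finset.prod_ne_zero_iff.2
  intro i _
  exact qint_ne_zero (by omega)

lemma qbinom_zero_right {n : ℤ} (hn : 0 ≤ n) : qbinom RatFunc.X n 0 = 1 := by
  unfold qbinom
  rw [if_pos ⟨le_refl 0, hn⟩]
  have h0 : qfact RatFunc.X 0 = 1 := by unfold qfact; simp
  rw [h0, sub_zero, one_mul, div_self (qfact_ne_zero n)]

lemma qbinom_of_neg {t : RatFunc ℚ} {n : ℤ} (m : ℤ) (hn : n < 0) : qbinom t n m = 0 := by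
  unfold qbinom
  rw [if_neg]
  rintro ⟨h1, h2⟩
  omega

/-- Splitting off the first term of a finsum over `ℕ`. -/
lemma finsum_nat_split {M : Type*} [AddCommMonoid M] (h : ℕ → M)
    (hf : (Function.support h).Finite) : ∑ᶠ n, h n = h 0 + ∑ᶠ n, h (n + 1) := by
  have huniv : (Set.univ : Set ℕ) = {0} ∪ Set.range (· + 1) := by
    ext n
    cases n with
    | zero => simp
    | succ m => simp only [Set.mem_univ, Set.mem_union, Set.mem_range, true_iff]; right; exact ⟨m, rfl⟩
  have hinj : Function.Injective (· + 1 : ℕ → ℕ) := add_left_injective 1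
  calc ∑ᶠ n, h n = ∑ᶠ n ∈ (Set.univ : Set ℕ), h n := (finsum_mem_univ h).symm
    _ = ∑ᶠ n ∈ ({0} : Set ℕ) ∪ Set.range (· + 1), h n := by rw [← huniv]
    _ = (∑ᶠ n ∈ ({0} : Set ℕ), h n) + ∑ᶠ n ∈ Set.range (· + 1 : ℕ → ℕ), h n := by
        apply finsum_mem_union'
        · rw [Set.disjoint_left]
          rintro x hx ⟨m, rfl⟩
          simp at hx
        · exact hf.subset (Set.inter_subset_right)
        · exact hf.subset (Set.inter_subset_right)
    _ = h 0 + ∑ᶠ n, h (n + 1) := by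
        rw [finsum_mem_singleton, finsum_mem_range hinj]


/-- The coefficient functions appearing in `Admissible`. -/
def fa (k : Fin 4 → ℕ → ℕ) (n : ℕ) : ℤ :=
  ((n : ℤ) + 2) * (k 0 n : ℤ) + ((n : ℤ) + 1) * ((k 1 n : ℤ) + (k 2 n : ℤ) + (k 3 n : ℤ))

def fb (k : Fin 4 → ℕ → ℕ) (n : ℕ) : ℤ := (k 0 n : ℤ) + (k 1 n : ℤ) + (k 2 n : ℤ) + (k 3 n : ℤ)

def fc (k : Fin 4 → ℕ → ℕ) (n : ℕ) : ℤ := (k 0 n : ℤ) + (k 3 n : ℤ)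

def fd (k : Fin 4 → ℕ → ℕ) (n : ℕ) : ℤ := (k 0 n : ℤ) + (k 2 n : ℤ)

lemma admissible_iff (a b c d : ℤ) (k : Fin 4 → ℕ → ℕ) :
    Admissible a b c d k ↔
      {p : Fin 4 × ℕ | k p.1 p.2 ≠ 0}.Finite ∧
      a = ∑ᶠ n, fa k n ∧ b = ∑ᶠ n, fb k n ∧ c = ∑ᶠ n, fc k n ∧ d = ∑ᶠ n, fd k n :=
  Iff.rfl

lemma support_finite_of_family {k : Fin 4 → ℕ → ℕ}
    (hfin : {p : Fin 4 × ℕ | k p.1 p.2 ≠ 0}.Finite) (g : ℕ → ℤ)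
    (hg : ∀ n, (∀ i, k i n = 0) → g n = 0) : (Function.support g).Finite := by
  apply (hfin.image Prod.snd).subset
  intro n hn
  rcases not_forall.1 (fun h => hn (hg n h)) with ⟨i, hi⟩
  exact ⟨(i, n), hi, rfl⟩

lemma supp_fa {k : Fin 4 → ℕ → ℕ} (hfin : {p : Fin 4 × ℕ | k p.1 p.2 ≠ 0}.Finite) :
    (Function.support (fa k)).Finite :=
  support_finite_of_family hfin _ (fun n h => by simp [fa, h 0, h 1, h 2, h 3])

lemma supp_fb {k : Fin 4 → ℕ → ℕ} (hfin : {p : Fin 4 × ℕ | k p.1 p.2 ≠ 0}.Finite) :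
    (Function.support (fb k)).Finite :=
  support_finite_of_family hfin _ (fun n h => by simp [fb, h 0, h 1, h 2, h 3])

lemma supp_fc {k : Fin 4 → ℕ → ℕ} (hfin : {p : Fin 4 × ℕ | k p.1 p.2 ≠ 0}.Finite) :
    (Function.support (fc k)).Finite :=
  support_finite_of_family hfin _ (fun n h => by simp [fc, h 0, h 3])

lemma supp_fd {k : Fin 4 → ℕ → ℕ} (hfin : {p : Fin 4 × ℕ | k p.1 p.2 ≠ 0}.Finite) :
    (Function.support (fd k)).Finite :=
  support_finite_of_family hfin _ (fun n h => by simp [fd, h 0, h 2])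

lemma supBound_bound {k : Fin 4 → ℕ → ℕ} (hfin : {p : Fin 4 × ℕ | k p.1 p.2 ≠ 0}.Finite)
    {i : Fin 4} {n : ℕ} (hn : supBound k ≤ n) : k i n = 0 := by
  have hne : {N | ∀ (i : Fin 4) (n : ℕ), N ≤ n → k i n = 0}.Nonempty := by
    obtain ⟨N, hN⟩ := (hfin.image Prod.snd).bddAbove
    refine ⟨N + 1, fun i n hn => ?_⟩
    by_contra h
    exact absurd (hN ⟨(i, n), h, rfl⟩) (by omega)
  exact Nat.sInf_mem hne i n hn

lemma supBound_le {k : Fin 4 → ℕ → ℕ} {N : ℕ} (h : ∀ (i : Fin 4) (n : ℕ), N ≤ n → k i n = 0) :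
    supBound k ≤ N :=
  Nat.sInf_le h

lemma supBound_last {k : Fin 4 → ℕ → ℕ} (hfin : {p : Fin 4 × ℕ | k p.1 p.2 ≠ 0}.Finite)
    (h0 : supBound k ≠ 0) : ∃ i : Fin 4, k i (supBound k - 1) ≠ 0 := by
  have h1 : supBound k - 1 ∉ {N | ∀ (i : Fin 4) (n : ℕ), N ≤ n → k i n = 0} := by
    intro hmem
    have := supBound_le hmem
    omega
  simp only [Set.mem_setOf_eq, not_forall] at h1
  obtain ⟨i, n, hn, hk⟩ := h1
  have hlt : n < supBound k := by
    by_contra h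
    exact hk (supBound_bound hfin (le_of_not_gt h))
  have : n = supBound k - 1 := by omega
  exact ⟨i, this ▸ hk⟩

lemma S1_nonneg (k : Fin 4 → ℕ → ℕ) (n : ℕ) : 0 ≤ S1 k n := by
  apply finsum_nonneg
  intro m
  have h0 : (0:ℤ) ≤ (m:ℤ) := Int.natCast_nonneg m
  have h1 : (0:ℤ) ≤ (k 0 (n+m+1) : ℤ) := Int.natCast_nonneg _
  have h2 : (0:ℤ) ≤ (k 1 (n+m+1) : ℤ) := Int.natCast_nonneg _
  have h3 : (0:ℤ) ≤ (k 2 (n+m+1) : ℤ) := Int.natCast_nonneg _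
  have h4 : (0:ℤ) ≤ (k 3 (n+m+1) : ℤ) := Int.natCast_nonneg _
  nlinarith

lemma S2_nonneg (k : Fin 4 → ℕ → ℕ) (n : ℕ) : 0 ≤ S2 k n := by
  apply finsum_nonneg
  intro m
  have h0 : (0:ℤ) ≤ (m:ℤ) := Int.natCast_nonneg m
  have h1 : (0:ℤ) ≤ (k 0 (n+m) : ℤ) := Int.natCast_nonneg _
  have h2 : (0:ℤ) ≤ (k 1 (n+m) : ℤ) := Int.natCast_nonneg _
  have h3 : (0:ℤ) ≤ (k 2 (n+m) : ℤ) := Int.natCast_nonneg _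
  have h4 : (0:ℤ) ≤ (k 3 (n+m) : ℤ) := Int.natCast_nonneg _
  nlinarith

lemma S1_eq_zero {k : Fin 4 → ℕ → ℕ} (hfin : {p : Fin 4 × ℕ | k p.1 p.2 ≠ 0}.Finite)
    {n : ℕ} (hn : supBound k ≤ n) : S1 k n = 0 := by
  unfold S1
  rw [finsum_congr (g := fun _ => (0 : ℤ)), finsum_zero]
  intro m
  rw [supBound_bound hfin (by omega), supBound_bound hfin (by omega),
    supBound_bound hfin (by omega), supBound_bound hfin (by omega)]
  push_cast
  ring

lemma S2_eq_zero {k : Fin 4 → ℕ → ℕ} (hfin : {p : Fin 4 × ℕ | k p.1 p.2 ≠ 0}.Finite)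
    {n : ℕ} (hn : supBound k ≤ n) : S2 k n = 0 := by
  unfold S2
  rw [finsum_congr (g := fun _ => (0 : ℤ)), finsum_zero]
  intro m
  rw [supBound_bound hfin (by omega), supBound_bound hfin (by omega),
    supBound_bound hfin (by omega), supBound_bound hfin (by omega)]
  push_cast
  ring

/-- Prepend `v` to the family `k`. -/
def ext4 (v : Fin 4 → ℕ) (k : Fin 4 → ℕ → ℕ) : Fin 4 → ℕ → ℕ :=
  fun i n => Nat.casesOn n (v i) (k i)

@[simp] lemma ext4_zero (v : Fin 4 → ℕ) (k : Fin 4 → ℕ → ℕ) (i : Fin 4) :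
    ext4 v k i 0 = v i := rfl

@[simp] lemma ext4_succ (v : Fin 4 → ℕ) (k : Fin 4 → ℕ → ℕ) (i : Fin 4) (n : ℕ) :
    ext4 v k i (n + 1) = k i n := rfl

/-- The splitting equivalence. -/
def E : ((Fin 4 → ℕ) × (Fin 4 → ℕ → ℕ)) ≃ (Fin 4 → ℕ → ℕ) where
  toFun p := ext4 p.1 p.2
  invFun k := (fun i => k i 0, fun i n => k i (n + 1))
  left_inv p := rfl
  right_inv k := by
    funext i n
    cases n <;> rfl

lemma ext4_fin_iff (v : Fin 4 → ℕ) (k : Fin 4 → ℕ → ℕ) :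
    {p : Fin 4 × ℕ | ext4 v k p.1 p.2 ≠ 0}.Finite ↔ {p : Fin 4 × ℕ | k p.1 p.2 ≠ 0}.Finite := by
  constructor
  · intro h
    have : {p : Fin 4 × ℕ | k p.1 p.2 ≠ 0} ⊆
        (fun p : Fin 4 × ℕ => (p.1, p.2 + 1)) ⁻¹' {p : Fin 4 × ℕ | ext4 v k p.1 p.2 ≠ 0} := by
      intro p hp
      simpa using hp
    apply Set.Finite.subset _ this
    apply Set.Finite.preimage _ h
    intro p _ q _ hpq
    simp only [Prod.mk.injEq] at hpq
    exact Prod.ext hpq.1 (by omega)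
  · intro h
    have : {p : Fin 4 × ℕ | ext4 v k p.1 p.2 ≠ 0} ⊆
        (Set.univ ×ˢ {0} : Set (Fin 4 × ℕ)) ∪
          ((fun p : Fin 4 × ℕ => (p.1, p.2 + 1)) '' {p : Fin 4 × ℕ | k p.1 p.2 ≠ 0}) := by
      rintro ⟨i, n⟩ hp
      cases n with
      | zero => left; simp
      | succ m =>
        right
        exact ⟨(i, m), hp, rfl⟩
    apply Set.Finite.subset _ this
    exact ((Set.finite_univ.prod (Set.finite_singleton 0)).union (h.image _))

lemma S1_shift (v : Fin 4 → ℕ) (k : Fin 4 → ℕ → ℕ) (n : ℕ) :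
    S1 (ext4 v k) (n + 1) = S1 k n := by
  unfold S1
  apply finsum_congr
  intro m
  have h : ∀ i : Fin 4, ext4 v k i (n + 1 + m + 1) = k i (n + m + 1) := by
    intro i
    have : n + 1 + m + 1 = (n + m + 1) + 1 := by omega
    rw [this, ext4_succ]
  rw [h 0, h 1, h 2, h 3]

lemma S2_shift (v : Fin 4 → ℕ) (k : Fin 4 → ℕ → ℕ) (n : ℕ) :
    S2 (ext4 v k) (n + 1) = S2 k n := by
  unfold S2
  apply finsum_congr
  intro m
  have h : ∀ i : Fin 4, ext4 v k i (n + 1 + m) = k i (n + m) := by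
    intro i
    have : n + 1 + m = (n + m) + 1 := by omega
    rw [this, ext4_succ]
  rw [h 0, h 1, h 2, h 3]

/-- The single factor of `termG`. -/
noncomputable def factor (t : RatFunc ℚ) (e : ℤ) (k : Fin 4 → ℕ → ℕ) (n : ℕ) : RatFunc ℚ :=
  qbinom t (e - S1 k n) (k 0 n) * qbinom t (e - S1 k n) (k 1 n) *
    qbinom t (e - S2 k n) (k 2 n) * qbinom t (e - S2 k n) (k 3 n)

lemma termG_def (t : RatFunc ℚ) (e : ℤ) (k : Fin 4 → ℕ → ℕ) :
    termG t e k = ∏ n ∈ Finset.range (supBound k), factor t e k n := rfl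

/-- Padding lemma: the product may be taken over any sufficiently long range,
provided the family is not identically zero. -/
lemma termG_pad (e : ℤ) {k : Fin 4 → ℕ → ℕ}
    (hfin : {p : Fin 4 × ℕ | k p.1 p.2 ≠ 0}.Finite)
    (hne : ∃ (i : Fin 4) (n : ℕ), k i n ≠ 0) {N : ℕ} (hN : supBound k ≤ N) :
    termG RatFunc.X e k = ∏ n ∈ Finset.range N, factor RatFunc.X e k n := by
  rw [termG_def]
  by_cases he : 0 ≤ e
  · rw [← Finset.prod_range_mul_prod_Ico _ hN]
    symm
    rw [mul_right_eq_self₀]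
    left
    apply Finset.prod_eq_one
    intro n hn
    rw [Finset.mem_Ico] at hn
    have hk : ∀ i : Fin 4, k i n = 0 := fun i => supBound_bound hfin hn.1
    unfold factor
    rw [hk 0, hk 1, hk 2, hk 3, S1_eq_zero hfin hn.1, S2_eq_zero hfin hn.1]
    push_cast
    rw [sub_zero, qbinom_zero_right he]
    ring
  · -- e < 0 : both sides vanish
    have hsb : supBound k ≠ 0 := by
      intro h
      obtain ⟨i, n, hk⟩ := hne
      exact hk (supBound_bound hfin (h ▸ Nat.zero_le n))
    obtain ⟨i, hi⟩ := supBound_last hfin hsb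
    set n₀ := supBound k - 1 with hn₀
    have hfac : factor RatFunc.X e k n₀ = 0 := by
      have hS1 := S1_nonneg k n₀
      have hS2 := S2_nonneg k n₀
      have hz : ∀ S : ℤ, 0 ≤ S → qbinom RatFunc.X (e - S) (k i n₀) = 0 := by
        intro S hS
        unfold qbinom
        rw [if_neg]
        rintro ⟨h1, h2⟩
        have : (k i n₀ : ℤ) ≠ 0 := by exact_mod_cast Nat.cast_ne_zero.2 hi
        omega
      unfold factor
      have hi4 : ∀ j : Fin 4, j = 0 ∨ j = 1 ∨ j = 2 ∨ j = 3 := by decide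
      rcases hi4 i with rfl | rfl | rfl | rfl
      · rw [hz _ hS1]; ring
      · rw [hz _ hS1]; ring
      · rw [hz _ hS2]; ring
      · rw [hz _ hS2]; ring
    rw [Finset.prod_eq_zero (Finset.mem_range.2 (show n₀ < supBound k by omega)) hfac,
      Finset.prod_eq_zero (Finset.mem_range.2 (show n₀ < N by omega)) hfac]

/-- Factorization of `termG` of an extended family. -/
lemma termG_ext (e : ℤ) (v : Fin 4 → ℕ) (k : Fin 4 → ℕ → ℕ)
    (hfinK : {p : Fin 4 × ℕ | ext4 v k p.1 p.2 ≠ 0}.Finite)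
    (hne : ∃ (i : Fin 4) (n : ℕ), ext4 v k i n ≠ 0) :
    termG RatFunc.X e (ext4 v k) = factor RatFunc.X e (ext4 v k) 0 * termG RatFunc.X e k := by
  have hfink : {p : Fin 4 × ℕ | k p.1 p.2 ≠ 0}.Finite := (ext4_fin_iff v k).1 hfinK
  have hNle : supBound (ext4 v k) ≤ supBound k + 1 := by
    apply supBound_le
    intro i n hn
    obtain ⟨m, rfl⟩ : ∃ m, n = m + 1 := ⟨n - 1, by omega⟩
    rw [ext4_succ]
    exact supBound_bound hfink (by omega)
  rw [termG_pad e hfinK hne hNle, Finset.prod_range_succ']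
  rw [mul_comm]
  congr 1
  rw [termG_def]
  apply Finset.prod_congr rfl
  intro n _
  unfold factor
  rw [S1_shift, S2_shift, ext4_succ, ext4_succ, ext4_succ, ext4_succ]

section AdmArith

variable {k : Fin 4 → ℕ → ℕ}

lemma supp_comb (hfin : {p : Fin 4 × ℕ | k p.1 p.2 ≠ 0}.Finite)
    (r₁ r₂ : ℤ) : (Function.support (fun n => r₁ * fa k n - r₂ * fb k n)).Finite :=
  support_finite_of_family hfin _ (fun n h => by simp [fa, fb, h 0, h 1, h 2, h 3])

lemma supp_comb2 (hfin : {p : Fin 4 × ℕ | k p.1 p.2 ≠ 0}.Finite)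
    (r₁ r₂ : ℤ) : (Function.support (fun n => r₁ * fa k n - r₂ * fb k n - fc k n)).Finite :=
  support_finite_of_family hfin _ (fun n h => by simp [fa, fb, fc, h 0, h 1, h 2, h 3])

lemma supp_mul_fa (hfin : {p : Fin 4 × ℕ | k p.1 p.2 ≠ 0}.Finite) (r : ℤ) :
    (Function.support (fun n => r * fa k n)).Finite :=
  support_finite_of_family hfin _ (fun n h => by simp [fa, h 0, h 1, h 2, h 3])

lemma supp_mul_fb (hfin : {p : Fin 4 × ℕ | k p.1 p.2 ≠ 0}.Finite) (r : ℤ) :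
    (Function.support (fun n => r * fb k n)).Finite :=
  support_finite_of_family hfin _ (fun n h => by simp [fb, h 0, h 1, h 2, h 3])

lemma comb_eq {a b c d : ℤ} (h : Admissible a b c d k) (r₁ r₂ : ℤ) :
    r₁ * a - r₂ * b - c - d = ∑ᶠ n, (r₁ * fa k n - r₂ * fb k n - fc k n - fd k n) := by
  obtain ⟨hfin, hA, hB, hC, hD⟩ := (admissible_iff a b c d k).1 h
  rw [hA, hB, hC, hD, mul_finsum _ _, mul_finsum _ _,
    ← finsum_sub_distrib (supp_mul_fa hfin r₁) (supp_mul_fb hfin r₂),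
    ← finsum_sub_distrib (supp_comb hfin r₁ r₂) (supp_fc hfin),
    ← finsum_sub_distrib (supp_comb2 hfin r₁ r₂) (supp_fd hfin)]

lemma S2_zero_eq {a b c d : ℤ} (h : Admissible a b c d k) : S2 k 0 = 2 * a - b - c - d := by
  rw [show (2 * a - b - c - d : ℤ) = 2 * a - 1 * b - c - d by ring, comb_eq h 2 1]
  unfold S2
  apply finsum_congr
  intro m
  simp only [zero_add, one_mul]
  unfold fa fb fc fd
  push_cast
  ring

lemma S1_zero_eq {a b c d : ℤ} (h : Admissible a b c d k) :
    S1 k 0 = 2 * a - 2 * b - c - d + (k 2 0 : ℤ) + (k 3 0 : ℤ) := by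
  have hfin := h.1
  have hkey := comb_eq h 2 2
  have hsupp : (Function.support (fun n => 2 * fa k n - 2 * fb k n - fc k n - fd k n)).Finite :=
    support_finite_of_family hfin _ (fun n hh => by simp [fa, fb, fc, fd, hh 0, hh 1, hh 2, hh 3])
  rw [finsum_nat_split _ hsupp] at hkey
  have h0 : 2 * fa k 0 - 2 * fb k 0 - fc k 0 - fd k 0 = -(k 2 0 : ℤ) - (k 3 0 : ℤ) := by
    unfold fa fb fc fd
    push_cast
    ring
  have hS : S1 k 0 = ∑ᶠ n, (2 * fa k (n + 1) - 2 * fb k (n + 1) - fc k (n + 1) - fd k (n + 1)) := by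
    unfold S1
    apply finsum_congr
    intro m
    unfold fa fb fc fd
    simp only [zero_add]
    push_cast
    ring
  rw [h0] at hkey
  rw [hS]
  linarith

end AdmArith

section AdmExt

variable (v : Fin 4 → ℕ) (k : Fin 4 → ℕ → ℕ)

lemma sum_fb_ext (hfin : {p : Fin 4 × ℕ | k p.1 p.2 ≠ 0}.Finite) :
    ∑ᶠ n, fb (ext4 v k) n = ((v 0 : ℤ) + v 1 + v 2 + v 3) + ∑ᶠ n, fb k n := by
  rw [finsum_nat_split _ (supp_fb ((ext4_fin_iff v k).2 hfin))]
  rfl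

lemma sum_fc_ext (hfin : {p : Fin 4 × ℕ | k p.1 p.2 ≠ 0}.Finite) :
    ∑ᶠ n, fc (ext4 v k) n = ((v 0 : ℤ) + v 3) + ∑ᶠ n, fc k n := by
  rw [finsum_nat_split _ (supp_fc ((ext4_fin_iff v k).2 hfin))]
  rfl

lemma sum_fd_ext (hfin : {p : Fin 4 × ℕ | k p.1 p.2 ≠ 0}.Finite) :
    ∑ᶠ n, fd (ext4 v k) n = ((v 0 : ℤ) + v 2) + ∑ᶠ n, fd k n := by
  rw [finsum_nat_split _ (supp_fd ((ext4_fin_iff v k).2 hfin))]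
  rfl

lemma sum_fa_ext (hfin : {p : Fin 4 × ℕ | k p.1 p.2 ≠ 0}.Finite) :
    ∑ᶠ n, fa (ext4 v k) n =
      (2 * (v 0 : ℤ) + v 1 + v 2 + v 3) + ((∑ᶠ n, fa k n) + ∑ᶠ n, fb k n) := by
  rw [finsum_nat_split _ (supp_fa ((ext4_fin_iff v k).2 hfin))]
  congr 1
  · unfold fa
    simp only [ext4_zero]
    push_cast
    ring
  · rw [← finsum_add_distrib (supp_fa hfin) (supp_fb hfin)]
    apply finsum_congr
    intro n
    unfold fa fb
    simp only [ext4_succ]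
    push_cast
    ring

lemma adm_ext_iff (a b c d : ℤ) :
    Admissible a b c d (ext4 v k) ↔
      Admissible (a - b - (v 0 : ℤ)) (b - v 0 - v 1 - v 2 - v 3) (c - v 0 - v 3)
        (d - v 0 - v 2) k := by
  rw [admissible_iff, admissible_iff]
  constructor
  · rintro ⟨h1, hA, hB, hC, hD⟩
    have h1' := (ext4_fin_iff v k).1 h1
    rw [sum_fa_ext v k h1'] at hA
    rw [sum_fb_ext v k h1'] at hB
    rw [sum_fc_ext v k h1'] at hC
    rw [sum_fd_ext v k h1'] at hD
    exact ⟨h1', by linarith, by linarith, by linarith, by linarith⟩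
  · rintro ⟨h1, hA, hB, hC, hD⟩
    refine ⟨(ext4_fin_iff v k).2 h1, ?_, ?_, ?_, ?_⟩
    · rw [sum_fa_ext v k h1]; linarith
    · rw [sum_fb_ext v k h1]; linarith
    · rw [sum_fc_ext v k h1]; linarith
    · rw [sum_fd_ext v k h1]; linarith

end AdmExt

section Finiteness

lemma fb_nonneg (k : Fin 4 → ℕ → ℕ) (n : ℕ) : 0 ≤ fb k n := by unfold fb; positivity

lemma fa_nonneg (k : Fin 4 → ℕ → ℕ) (n : ℕ) : 0 ≤ fa k n := by unfold fa; positivity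

lemma adm_b_nonneg {a b c d : ℤ} {k : Fin 4 → ℕ → ℕ} (h : Admissible a b c d k) : 0 ≤ b := by
  rw [((admissible_iff a b c d k).1 h).2.2.1]
  exact finsum_nonneg (fb_nonneg k)

lemma G_eq_zero_of_b_neg (t : RatFunc ℚ) {a b : ℤ} (c d e : ℤ) (hb : b < 0) :
    G t a b c d e = 0 := by
  unfold G
  rw [finsum_congr (g := fun _ => (0 : RatFunc ℚ)) (fun k => by
    rw [if_neg]
    intro h
    exact absurd (adm_b_nonneg h) (by omega)), finsum_zero]

lemma adm_bound {a b c d : ℤ} {k : Fin 4 → ℕ → ℕ} (h : Admissible a b c d k) (i : Fin 4) (n : ℕ) :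
    k i n ≤ b.toNat ∧ (a.toNat + 1 ≤ n → k i n = 0) := by
  obtain ⟨hfin, hA, hB, hC, hD⟩ := (admissible_iff a b c d k).1 h
  constructor
  · have h1 : fb k n ≤ b := by
      rw [hB]
      exact single_le_finsum n (supp_fb hfin) (fb_nonneg k)
    have h2 : (k i n : ℤ) ≤ fb k n := by
      unfold fb
      have hi4 : ∀ j : Fin 4, j = 0 ∨ j = 1 ∨ j = 2 ∨ j = 3 := by decide
      have c0 : (0:ℤ) ≤ (k 0 n : ℤ) := Int.natCast_nonneg _
      have c1 : (0:ℤ) ≤ (k 1 n : ℤ) := Int.natCast_nonneg _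
      have c2 : (0:ℤ) ≤ (k 2 n : ℤ) := Int.natCast_nonneg _
      have c3 : (0:ℤ) ≤ (k 3 n : ℤ) := Int.natCast_nonneg _
      rcases hi4 i with rfl | rfl | rfl | rfl <;> linarith
    omega
  · intro hn
    by_contra hk
    have h1 : fa k n ≤ a := by
      rw [hA]
      exact single_le_finsum n (supp_fa hfin) (fa_nonneg k)
    have h2 : ((n : ℤ) + 1) ≤ fa k n := by
      unfold fa
      have hi4 : ∀ j : Fin 4, j = 0 ∨ j = 1 ∨ j = 2 ∨ j = 3 := by decide
      have hk' : (1:ℤ) ≤ (k i n : ℤ) := by exact_mod_cast Nat.one_le_iff_ne_zero.2 hk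
      have c0 : (0:ℤ) ≤ (k 0 n : ℤ) := Int.natCast_nonneg _
      have c1 : (0:ℤ) ≤ (k 1 n : ℤ) := Int.natCast_nonneg _
      have c2 : (0:ℤ) ≤ (k 2 n : ℤ) := Int.natCast_nonneg _
      have c3 : (0:ℤ) ≤ (k 3 n : ℤ) := Int.natCast_nonneg _
      have hn' : (0:ℤ) ≤ (n : ℤ) := Int.natCast_nonneg _
      rcases hi4 i with rfl | rfl | rfl | rfl <;> nlinarith
    omega

lemma bounded_finite (A B : ℕ) :
    {k : Fin 4 → ℕ → ℕ | ∀ (i : Fin 4) (n : ℕ), k i n ≤ B ∧ (A ≤ n → k i n = 0)}.Finite := by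
  set T := {k : Fin 4 → ℕ → ℕ | ∀ (i : Fin 4) (n : ℕ), k i n ≤ B ∧ (A ≤ n → k i n = 0)}
  set Ψ : (Fin 4 → ℕ → ℕ) → ((Fin 4 × Fin A) → ℕ) := fun k p => k p.1 (p.2 : ℕ)
  have himg : (Ψ '' T).Finite := by
    apply Set.Finite.subset (Set.Finite.pi (fun _ : Fin 4 × Fin A => Set.finite_Iic B))
    rintro g ⟨k, hk, rfl⟩
    intro p _
    exact (hk p.1 p.2).1
  apply Set.Finite.of_finite_image himg
  intro k hk k' hk' hΨ
  funext i n
  by_cases hn : n < A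
  · exact congrFun hΨ (i, ⟨n, hn⟩)
  · rw [(hk i n).2 (by omega), (hk' i n).2 (by omega)]

lemma adm_finite (a b c d : ℤ) : {k : Fin 4 → ℕ → ℕ | Admissible a b c d k}.Finite := by
  apply Set.Finite.subset (bounded_finite (a.toNat + 1) b.toNat)
  intro k hk
  exact fun i n => adm_bound hk i n

end Finiteness

open Classical in
lemma inner_sum (a b c d e : ℤ) (hb : 0 < b) (v : Fin 4 → ℕ) :
    (∑ᶠ k : Fin 4 → ℕ → ℕ,
        if Admissible a b c d (ext4 v k) then termG RatFunc.X e (ext4 v k) else 0) =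
      qbinom RatFunc.X (e - 2*a + 2*b + c + d - (v 2 : ℤ) - (v 3 : ℤ)) (v 0) *
        qbinom RatFunc.X (e - 2*a + 2*b + c + d - (v 2 : ℤ) - (v 3 : ℤ)) (v 1) *
        qbinom RatFunc.X (e - 2*a + b + c + d) (v 2) *
        qbinom RatFunc.X (e - 2*a + b + c + d) (v 3) *
        G RatFunc.X (a - b - (v 0 : ℤ)) (b - v 0 - v 1 - v 2 - v 3) (c - v 0 - v 3)
          (d - v 0 - v 2) e := by
  set C : RatFunc ℚ :=
    qbinom RatFunc.X (e - 2*a + 2*b + c + d - (v 2 : ℤ) - (v 3 : ℤ)) (v 0) *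
      qbinom RatFunc.X (e - 2*a + 2*b + c + d - (v 2 : ℤ) - (v 3 : ℤ)) (v 1) *
      qbinom RatFunc.X (e - 2*a + b + c + d) (v 2) *
      qbinom RatFunc.X (e - 2*a + b + c + d) (v 3) with hC
  have step1 : ∀ k : Fin 4 → ℕ → ℕ,
      (if Admissible a b c d (ext4 v k) then termG RatFunc.X e (ext4 v k) else 0) =
        C * (if Admissible (a - b - (v 0 : ℤ)) (b - v 0 - v 1 - v 2 - v 3) (c - v 0 - v 3)
          (d - v 0 - v 2) k then termG RatFunc.X e k else 0) := by
    intro k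
    by_cases hk : Admissible (a - b - (v 0 : ℤ)) (b - v 0 - v 1 - v 2 - v 3) (c - v 0 - v 3)
      (d - v 0 - v 2) k
    · have hK : Admissible a b c d (ext4 v k) := (adm_ext_iff v k a b c d).2 hk
      rw [if_pos hK, if_pos hk]
      have hne : ∃ (i : Fin 4) (n : ℕ), ext4 v k i n ≠ 0 := by
        by_contra h
        push_neg at h
        have hb0 : b = 0 := by
          rw [((admissible_iff a b c d (ext4 v k)).1 hK).2.2.1,
            finsum_congr (g := fun _ => (0:ℤ)) (fun n => by simp [fb, h 0 n, h 1 n, h 2 n, h 3 n]),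
            finsum_zero]
        omega
      rw [termG_ext e v k hK.1 hne]
      congr 1
      unfold factor
      rw [S1_zero_eq hK, S2_zero_eq hK]
      simp only [ext4_zero]
      have harg1 : e - (2*a - 2*b - c - d + ((v 2 : ℤ)) + (v 3 : ℤ)) =
          e - 2*a + 2*b + c + d - (v 2 : ℤ) - (v 3 : ℤ) := by ring
      have harg2 : e - (2*a - b - c - d) = e - 2*a + b + c + d := by ring
      rw [harg1, harg2]
    · rw [if_neg (fun hK => hk ((adm_ext_iff v k a b c d).1 hK)), if_neg hk, mul_zero]
  rw [finsum_congr step1]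
  have hsupp : (Function.support (fun k : Fin 4 → ℕ → ℕ =>
      if Admissible (a - b - (v 0 : ℤ)) (b - v 0 - v 1 - v 2 - v 3) (c - v 0 - v 3)
        (d - v 0 - v 2) k then termG RatFunc.X e k else 0)).Finite := by
    apply (adm_finite (a - b - (v 0 : ℤ)) (b - v 0 - v 1 - v 2 - v 3) (c - v 0 - v 3)
      (d - v 0 - v 2)).subset
    intro k hk
    by_contra h
    exact hk (if_neg h)
  rw [← mul_finsum _ C]
  rfl

/-- Packaging four naturals into a `Fin 4`-tuple. -/
def E4 : (ℕ × ℕ × ℕ × ℕ) ≃ (Fin 4 → ℕ) where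
  toFun p := ![p.1, p.2.1, p.2.2.1, p.2.2.2]
  invFun v := (v 0, v 1, v 2, v 3)
  left_inv p := rfl
  right_inv v := by
    funext i
    fin_cases i <;> rfl

@[simp] lemma E4_zero (p : ℕ × ℕ × ℕ × ℕ) : E4 p 0 = p.1 := rfl
@[simp] lemma E4_one (p : ℕ × ℕ × ℕ × ℕ) : E4 p 1 = p.2.1 := rfl
@[simp] lemma E4_two (p : ℕ × ℕ × ℕ × ℕ) : E4 p 2 = p.2.2.1 := rfl
@[simp] lemma E4_three (p : ℕ × ℕ × ℕ × ℕ) : E4 p 3 = p.2.2.2 := rfl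

lemma finsum_curry4 {M : Type*} [AddCommMonoid M] (f : ℕ → ℕ → ℕ → ℕ → M) (B : ℕ)
    (hf : ∀ n₁ n₂ n₃ n₄, (B < n₁ ∨ B < n₂ ∨ B < n₃ ∨ B < n₄) → f n₁ n₂ n₃ n₄ = 0) :
    ∑ᶠ p : ℕ × ℕ × ℕ × ℕ, f p.1 p.2.1 p.2.2.1 p.2.2.2 =
      ∑ᶠ n₁, ∑ᶠ n₂, ∑ᶠ n₃, ∑ᶠ n₄, f n₁ n₂ n₃ n₄ := by
  have hIic := Set.finite_Iic B
  have h4 : (Function.support (fun p : ℕ × ℕ × ℕ × ℕ => f p.1 p.2.1 p.2.2.1 p.2.2.2)).Finite := by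
    apply (hIic.prod (hIic.prod (hIic.prod hIic))).subset
    intro p hp
    simp only [Set.mem_prod, Set.mem_Iic]
    refine ⟨?_, ?_, ?_, ?_⟩ <;> (by_contra h; exact hp (hf _ _ _ _ (by omega)))
  rw [finsum_curry _ h4]
  apply finsum_congr
  intro n₁
  have h3 : (Function.support (fun q : ℕ × ℕ × ℕ => f n₁ q.1 q.2.1 q.2.2)).Finite := by
    apply (hIic.prod (hIic.prod hIic)).subset
    intro q hq
    simp only [Set.mem_prod, Set.mem_Iic]
    refine ⟨?_, ?_, ?_⟩ <;> (by_contra h; exact hq (hf _ _ _ _ (by omega)))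
  rw [finsum_curry _ h3]
  apply finsum_congr
  intro n₂
  have h2 : (Function.support (fun q : ℕ × ℕ => f n₁ n₂ q.1 q.2)).Finite := by
    apply (hIic.prod hIic).subset
    intro q hq
    simp only [Set.mem_prod, Set.mem_Iic]
    refine ⟨?_, ?_⟩ <;> (by_contra h; exact hq (hf _ _ _ _ (by omega)))
  rw [finsum_curry _ h2]

end Stmt6Aux

open Stmt6Aux

theorem stmt6 (a b c d e : ℤ) (ha : 0 < a) (hb : 0 < b) (hc : 0 ≤ c) (hd : 0 ≤ d) :
    G RatFunc.X a b c d e =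
      ∑ᶠ k₁ : ℕ, ∑ᶠ k₂ : ℕ, ∑ᶠ k₃ : ℕ, ∑ᶠ k₄ : ℕ,
        qbinom RatFunc.X (e - 2*a + 2*b + c + d - (k₃ : ℤ) - (k₄ : ℤ)) (k₁ : ℤ) *
        qbinom RatFunc.X (e - 2*a + 2*b + c + d - (k₃ : ℤ) - (k₄ : ℤ)) (k₂ : ℤ) *
        qbinom RatFunc.X (e - 2*a + b + c + d) (k₃ : ℤ) *
        qbinom RatFunc.X (e - 2*a + b + c + d) (k₄ : ℤ) *
        G RatFunc.X (a - b - k₁) (b - k₁ - k₂ - k₃ - k₄) (c - k₁ - k₄)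
          (d - k₁ - k₃) e := by
  classical
  -- the summand as a function of four naturals
  set H4 : ℕ → ℕ → ℕ → ℕ → RatFunc ℚ := fun k₁ k₂ k₃ k₄ =>
    qbinom RatFunc.X (e - 2*a + 2*b + c + d - (k₃ : ℤ) - (k₄ : ℤ)) (k₁ : ℤ) *
      qbinom RatFunc.X (e - 2*a + 2*b + c + d - (k₃ : ℤ) - (k₄ : ℤ)) (k₂ : ℤ) *
      qbinom RatFunc.X (e - 2*a + b + c + d) (k₃ : ℤ) *
      qbinom RatFunc.X (e - 2*a + b + c + d) (k₄ : ℤ) *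
      G RatFunc.X (a - b - k₁) (b - k₁ - k₂ - k₃ - k₄) (c - k₁ - k₄) (d - k₁ - k₃) e
    with hH4
  have hF : G RatFunc.X a b c d e =
      ∑ᶠ K : Fin 4 → ℕ → ℕ, if Admissible a b c d K then termG RatFunc.X e K else 0 := rfl
  rw [hF, ← finsum_comp_equiv E]
  have hsuppFE : (Function.support (fun p : (Fin 4 → ℕ) × (Fin 4 → ℕ → ℕ) =>
      if Admissible a b c d (E p) then termG RatFunc.X e (E p) else 0)).Finite := by
    have hFfin : (Function.support (fun K : Fin 4 → ℕ → ℕ =>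
        if Admissible a b c d K then termG RatFunc.X e K else 0)).Finite := by
      apply (adm_finite a b c d).subset
      intro K hK
      by_contra h
      exact hK (if_neg h)
    apply (Set.Finite.preimage (E.injective.injOn) hFfin).subset
    intro p hp
    exact hp
  rw [finsum_curry _ hsuppFE]
  have hinner : ∀ v : Fin 4 → ℕ,
      (∑ᶠ k : Fin 4 → ℕ → ℕ, if Admissible a b c d (E (v, k)) then
        termG RatFunc.X e (E (v, k)) else 0) = H4 (v 0) (v 1) (v 2) (v 3) := by
    intro v
    exact inner_sum a b c d e hb v
  rw [finsum_congr hinner]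
  -- switch to the product form
  rw [← finsum_comp_equiv E4]
  have hpt : ∀ p : ℕ × ℕ × ℕ × ℕ,
      H4 (E4 p 0) (E4 p 1) (E4 p 2) (E4 p 3) = H4 p.1 p.2.1 p.2.2.1 p.2.2.2 := by
    intro p
    rw [E4_zero, E4_one, E4_two, E4_three]
  rw [finsum_congr hpt]
  apply finsum_curry4 _ b.toNat
  intro n₁ n₂ n₃ n₄ hcase
  have hbneg : b - (n₁ : ℤ) - n₂ - n₃ - n₄ < 0 := by
    rcases hcase with h | h | h | h <;> omega
  simp only [hH4]
  rw [G_eq_zero_of_b_neg _ _ _ _ hbneg, mul_zero]
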